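/- Let M be a von Neumann algebra on H with cyclic separating vector Ω, and let D ⊆ M be a subset such that DΩ is a core for the Tomita operator S. Suppose a bounded operator O commutes with every element of D. Then O commutes with every element of M, i.e., O ∈ M'. -/

import Mathlib

open ContinuousLinearMap Filter

variable {H : Type*} [NormedAddCommGroup H] [InnerProductSpace ℂ H] [CompleteSpace H]

/-- `Ω` is a cyclic vector for a set `S` of bounded operators. -/
def CyclicVector (S : Set (H →L[ℂ] H)) (Ω : H) : Prop :=
  Dense ((Submodule.span ℂ ((fun a : H →L[ℂ] H => a Ω) '' S) : Submodule ℂ H) : Set H)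

/-- `Ω` is a separating vector for a set `S` of bounded operators. -/
def SeparatingVector (S : Set (H →L[ℂ] H)) (Ω : H) : Prop :=
  ∀ a ∈ S, a Ω = 0 → a = 0

/-- Let `M` be a von Neumann algebra with cyclic separating vector `Ω`, and let
`D ⊆ M` be a subset such that `DΩ` is a core for the Tomita operator `S`, in the
sense that for every `a ∈ M` there is a sequence `aₙ ∈ D` with `aₙΩ → aΩ` and
`aₙ*Ω → a*Ω`.  If a bounded operator `O` commutes with every element of `D`,
then `O` commutes with every element of `M`, i.e. `O ∈ M'`. -/
theorem stmt16 (M : VonNeumannAlgebra H) (Ω : H)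
    (hcyc : CyclicVector (M : Set (H →L[ℂ] H)) Ω)
    (hsep : SeparatingVector (M : Set (H →L[ℂ] H)) Ω)
    (D : Set (H →L[ℂ] H)) (hD : D ⊆ (M : Set (H →L[ℂ] H)))
    (hcore : ∀ a ∈ M, ∃ u : ℕ → (H →L[ℂ] H), (∀ n, u n ∈ D) ∧
      Filter.Tendsto (fun n => u n Ω) Filter.atTop (nhds (a Ω)) ∧
      Filter.Tendsto (fun n => (star (u n)) Ω) Filter.atTop
        (nhds ((star a : H →L[ℂ] H) Ω)))
    (O : H →L[ℂ] H) (hO : ∀ d ∈ D, O * d = d * O) :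
    O ∈ M.commutant := by
  classical
  set C : Set (H →L[ℂ] H) := Set.centralizer (M : Set (H →L[ℂ] H)) with hCdef
  have hCstar : ∀ b ∈ C, star b ∈ C := fun b hb =>
    Set.star_mem_centralizer' (fun a ha => star_mem ha) hb
  -- commutation of elements of M with elements of C, pointwise
  have hcomm : ∀ a ∈ (M : Set (H →L[ℂ] H)), ∀ b ∈ C, ∀ x : H, a (b x) = b (a x) := by
    intro a ha b hb x
    have h := hb a ha
    calc a (b x) = (a * b) x := rfl
    _ = (b * a) x := by rw [h]
    _ = b (a x) := rfl
  -- the span of C Ω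
  set K : Submodule ℂ H := Submodule.span ℂ ((fun b : H →L[ℂ] H => b Ω) '' C) with hKdef
  -- K is invariant under C
  have hinv : ∀ b ∈ C, K ≤ K.comap (b : H →ₗ[ℂ] H) := by
    intro b hb
    rw [hKdef, Submodule.span_le]
    rintro _ ⟨c, hc, rfl⟩
    simp only [SetLike.mem_coe, Submodule.mem_comap, ContinuousLinearMap.coe_coe]
    exact Submodule.subset_span ⟨b * c, Set.mul_mem_centralizer hb hc, rfl⟩
  set Kc : Submodule ℂ H := K.topologicalClosure with hKcdef
  haveI : CompleteSpace Kc := K.isClosed_topologicalClosure.completeSpace_coe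
  -- Kc invariant under C
  have hinvc : ∀ b ∈ C, ∀ x ∈ Kc, b x ∈ Kc := by
    intro b hb x hx
    have hclosed : IsClosed ((Kc.comap (b : H →ₗ[ℂ] H) : Submodule ℂ H) : Set H) :=
      K.isClosed_topologicalClosure.preimage b.continuous
    have hle : K ≤ Kc.comap (b : H →ₗ[ℂ] H) :=
      le_trans (hinv b hb) (Submodule.comap_mono K.le_topologicalClosure)
    exact K.topologicalClosure_minimal hle hclosed hx
  -- Kcᗮ invariant under C
  have hinvperp : ∀ b ∈ C, ∀ v ∈ Kcᗮ, b v ∈ Kcᗮ := by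
    intro b hb v hv
    rw [Submodule.mem_orthogonal]
    intro y hy
    have : (inner ℂ y (b v) : ℂ) = inner ℂ ((star b) y) v := by
      rw [ContinuousLinearMap.star_eq_adjoint, ContinuousLinearMap.adjoint_inner_left]
    rw [this]
    exact (Submodule.mem_orthogonal Kc v).mp hv _ (hinvc (star b) (hCstar b hb) y hy)
  -- the orthogonal projection onto Kc
  set P : H →L[ℂ] H := Kc.subtypeL.comp (Submodule.orthogonalProjectionOnto Kc) with hPdef
  have hPapply : ∀ x : H, P x = (Submodule.orthogonalProjectionOnto Kc x : H) := fun x => rfl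
  have hPmemKc : ∀ x : H, P x ∈ Kc := fun x => (Submodule.orthogonalProjectionOnto Kc x).2
  -- P commutes with every element of C
  have hPb : ∀ b ∈ C, ∀ x : H, P (b x) = b (P x) := by
    intro b hb x
    rw [hPapply]
    apply Submodule.eq_starProjection_of_mem_orthogonal
    · exact hinvc b hb _ (hPmemKc x)
    · have : b x - b (P x) = b (x - P x) := by rw [map_sub]
      rw [this]
      exact hinvperp b hb _ (Submodule.sub_starProjection_mem_orthogonal x)
  -- hence P ∈ M
  have hPM : P ∈ (M : Set (H →L[ℂ] H)) := by
    rw [← M.centralizer_centralizer]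
    intro b hb
    ext x
    exact (hPb b hb x).symm
  -- Ω ∈ Kc
  have hΩK : Ω ∈ K := Submodule.subset_span ⟨1, Set.one_mem_centralizer, by simp⟩
  have hΩKc : Ω ∈ Kc := K.le_topologicalClosure hΩK
  have hPΩ : P Ω = Ω := by
    rw [hPapply]; exact Submodule.starProjection_eq_self_iff.mpr hΩKc
  -- 1 - P kills Ω, so P = 1
  have h1P : (1 : H →L[ℂ] H) - P ∈ (M : Set (H →L[ℂ] H)) :=
    sub_mem (one_mem M) hPM
  have hP1 : P = 1 := by
    have h0 : ((1 : H →L[ℂ] H) - P) Ω = 0 := by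
      simp [hPΩ]
    have := hsep _ h1P h0
    have : (1 : H →L[ℂ] H) = P := by
      rwa [sub_eq_zero] at this
    exact this.symm
  -- K is dense
  have hKtop : Kc = ⊤ := by
    rw [eq_top_iff]
    intro x _
    have : P x ∈ Kc := hPmemKc x
    rwa [hP1, ContinuousLinearMap.one_apply] at this
  have hdense : Dense (K : Set H) :=
    Submodule.dense_iff_topologicalClosure_eq_top.mpr hKtop
  -- Main argument
  rw [VonNeumannAlgebra.mem_commutant_iff]
  intro a ha
  obtain ⟨u, huD, huΩ, hustar⟩ := hcore a ha
  have haM : a ∈ (M : Set (H →L[ℂ] H)) := ha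
  have key : ∀ b ∈ C, O (a (b Ω)) = a (O (b Ω)) := by
    intro b hb
    -- show the difference is orthogonal to the dense K
    have horto : ∀ y ∈ K, (inner ℂ (O (a (b Ω)) - a (O (b Ω))) y : ℂ) = 0 := by
      have hgen : ∀ c ∈ C, (inner ℂ (O (a (b Ω)) - a (O (b Ω))) (c Ω) : ℂ) = 0 := by
        intro c hc
        have heq : (inner ℂ (O (a (b Ω))) (c Ω) : ℂ) = inner ℂ (a (O (b Ω))) (c Ω) := by
          have l1 : Tendsto (fun n => (inner ℂ (O (b (u n Ω))) (c Ω) : ℂ)) atTop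
              (nhds (inner ℂ (O (b (a Ω))) (c Ω))) := by
            exact (((O.continuous.comp b.continuous).tendsto _).comp huΩ).inner
              tendsto_const_nhds
          have l2 : ∀ n, (inner ℂ (O (b (u n Ω))) (c Ω) : ℂ)
              = inner ℂ (O (b Ω)) (c ((star (u n)) Ω)) := by
            intro n
            have hb1 : b (u n Ω) = u n (b Ω) :=
              (hcomm (u n) (hD (huD n)) b hb Ω).symm
            have hO1 : O (u n (b Ω)) = u n (O (b Ω)) := by
              have := hO (u n) (huD n)
              calc O (u n (b Ω)) = (O * u n) (b Ω) := rfl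
              _ = (u n * O) (b Ω) := by rw [this]
              _ = u n (O (b Ω)) := rfl
            have hadj : (inner ℂ (u n (O (b Ω))) (c Ω) : ℂ)
                = inner ℂ (O (b Ω)) ((star (u n)) (c Ω)) := by
              rw [ContinuousLinearMap.star_eq_adjoint,
                ContinuousLinearMap.adjoint_inner_right]
            have hc1 : (star (u n)) (c Ω) = c ((star (u n)) Ω) :=
              hcomm (star (u n)) (star_mem (hD (huD n))) c hc Ω
            rw [hb1, hO1, hadj, hc1]
          have l3 : Tendsto (fun n => (inner ℂ (O (b (u n Ω))) (c Ω) : ℂ)) atTop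
              (nhds (inner ℂ (O (b Ω)) (c ((star a : H →L[ℂ] H) Ω)))) := by
            simp only [l2]
            exact tendsto_const_nhds.inner ((c.continuous.tendsto _).comp hustar)
          have hlim := tendsto_nhds_unique l1 l3
          have r1 : a (b Ω) = b (a Ω) := hcomm a haM b hb Ω
          have r2 : c ((star a : H →L[ℂ] H) Ω) = (star a : H →L[ℂ] H) (c Ω) :=
            (hcomm (star a) (star_mem haM) c hc Ω).symm
          have r3 : (inner ℂ (O (b Ω)) ((star a : H →L[ℂ] H) (c Ω)) : ℂ)
              = inner ℂ (a (O (b Ω))) (c Ω) := by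
            rw [ContinuousLinearMap.star_eq_adjoint,
              ContinuousLinearMap.adjoint_inner_right]
          rw [r1, hlim, r2, r3]
        rw [inner_sub_left, heq, sub_self]
      intro y hy
      induction hy using Submodule.span_induction with
      | mem y hy =>
        obtain ⟨c, hc, rfl⟩ := hy
        exact hgen c hc
      | zero => simp
      | add y z _ _ hy hz => rw [inner_add_right, hy, hz, add_zero]
      | smul t y _ hy => rw [inner_smul_right, hy, mul_zero]
    -- orthogonal to a dense submodule implies zero
    have hbot : Kᗮ = ⊥ := Submodule.topologicalClosure_eq_top_iff.mp hKtop
    have hmem : O (a (b Ω)) - a (O (b Ω)) ∈ Kᗮ :=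
      (Submodule.mem_orthogonal' K _).mpr horto
    rw [hbot, Submodule.mem_bot, sub_eq_zero] at hmem
    exact hmem
  -- extend by linearity and density
  have heqon : ∀ x ∈ K, O (a x) = a (O x) := by
    intro x hx
    induction hx using Submodule.span_induction with
    | mem y hy =>
      obtain ⟨c, hc, rfl⟩ := hy
      exact key c hc
    | zero => simp
    | add y z _ _ hy hz => simp [map_add, hy, hz]
    | smul t y _ hy => simp [map_smul, hy]
  have hfun : (fun x => O (a x)) = fun x => a (O x) := by
    apply Continuous.ext_on hdense
    · exact O.continuous.comp a.continuous
    · exact a.continuous.comp O.continuous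
    · exact heqon
  ext x
  have := congrFun hfun x
  simpa using this.symm
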